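/- arXiv:2405.19640 — 8 statements merged into one kernel-verified Lean document; each statement's English description precedes it below -/
import Mathlib

section
/- If G is an inner ultrahomogeneous group, then its centre is either trivial or cyclic of order 2; moreover, in the latter case the nontrivial central element is the unique element of G of order 2. -/
def InnerUltrahomogeneous (G : Type*) [Group G] : Prop :=
  ∀ (A B : Subgroup G), A.FG → B.FG → ∀ e : A ≃* B,
    ∃ g : G, ∀ a : A, g⁻¹ * (a : G) * g = ((e a : B) : G)

section aux

variable {G : Type*} [Group G]

lemma range_zpowersHom (x : G) : (zpowersHom G x).range = Subgroup.zpowers x := by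
  ext g
  constructor
  · rintro ⟨n, rfl⟩
    exact ⟨n.toAdd, rfl⟩
  · rintro ⟨n, rfl⟩
    exact ⟨Multiplicative.ofAdd n, rfl⟩

lemma ker_zpowersHom_eq {x y : G} (hxy : orderOf x = orderOf y) :
    (zpowersHom G x).ker = (zpowersHom G y).ker := by
  ext n
  simp only [MonoidHom.mem_ker, zpowersHom_apply]
  rw [← orderOf_dvd_iff_zpow_eq_one, ← orderOf_dvd_iff_zpow_eq_one, hxy]

lemma fg_zpowers (x : G) : (Subgroup.zpowers x).FG :=
  ⟨{x}, by simp [← Subgroup.zpowers_eq_closure]⟩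

/-- In an inner ultrahomogeneous group, elements of the same order are conjugate. -/
lemma conj_of_orderOf_eq (h : InnerUltrahomogeneous G) {x y : G}
    (hxy : orderOf x = orderOf y) : ∃ g : G, g⁻¹ * x * g = y := by
  set fx := zpowersHom G x
  set fy := zpowersHom G y
  have hker : fx.ker = fy.ker := ker_zpowersHom_eq hxy
  let e : Subgroup.zpowers x ≃* Subgroup.zpowers y :=
    (((MulEquiv.subgroupCongr (range_zpowersHom x).symm).trans
      (QuotientGroup.quotientKerEquivRange fx).symm).trans
      ((QuotientGroup.quotientMulEquivOfEq hker).trans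
        (QuotientGroup.quotientKerEquivRange fy))).trans
      (MulEquiv.subgroupCongr (range_zpowersHom y))
  obtain ⟨g, hg⟩ := h _ _ (fg_zpowers x) (fg_zpowers y) e
  refine ⟨g, ?_⟩
  have hx : x ∈ Subgroup.zpowers x := Subgroup.mem_zpowers x
  have key : ((e ⟨x, hx⟩ : Subgroup.zpowers y) : G) = y := by
    have h1 : (QuotientGroup.quotientKerEquivRange fx).symm
        ((MulEquiv.subgroupCongr (range_zpowersHom x).symm) ⟨x, hx⟩)
        = QuotientGroup.mk (Multiplicative.ofAdd (1 : ℤ)) := by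
      rw [MulEquiv.symm_apply_eq]
      ext
      show x = fx (Multiplicative.ofAdd (1 : ℤ))
      simp [fx, zpowersHom_apply]
    show ((MulEquiv.subgroupCongr (range_zpowersHom y))
        ((QuotientGroup.quotientKerEquivRange fy)
          ((QuotientGroup.quotientMulEquivOfEq hker)
            ((QuotientGroup.quotientKerEquivRange fx).symm
              ((MulEquiv.subgroupCongr (range_zpowersHom x).symm) ⟨x, hx⟩)))) : G) = y
    rw [h1, QuotientGroup.quotientMulEquivOfEq_mk]
    show fy (Multiplicative.ofAdd (1 : ℤ)) = y
    simp [fy, zpowersHom_apply]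
  have := hg ⟨x, hx⟩
  simpa [key] using this

/-- A central element is conjugate only to itself; hence any element of the same order
as a central element equals it. -/
lemma eq_of_central_of_orderOf_eq (h : InnerUltrahomogeneous G) {z w : G}
    (hz : z ∈ Subgroup.center G) (hzw : orderOf z = orderOf w) : w = z := by
  obtain ⟨g, hg⟩ := conj_of_orderOf_eq h hzw
  have : g⁻¹ * z * g = z := by
    rw [Subgroup.mem_center_iff.mp hz g⁻¹, mul_assoc, inv_mul_cancel, mul_one]
  rw [← hg, this]

end aux

theorem center_of_innerUltrahomogeneous
    {G : Type*} [Group G] (h : InnerUltrahomogeneous G) :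
    Subgroup.center G = ⊥ ∨
      ∃ z : G, z ∈ Subgroup.center G ∧ orderOf z = 2 ∧
        Subgroup.center G = Subgroup.zpowers z ∧
        ∀ w : G, orderOf w = 2 → w = z := by
  by_cases hc : Subgroup.center G = ⊥
  · exact Or.inl hc
  · right
    have : ∃ z ∈ Subgroup.center G, z ≠ 1 := by
      by_contra hcon
      push_neg at hcon
      exact hc ((Subgroup.eq_bot_iff_forall _).mpr hcon)
    obtain ⟨z, hz, hz1⟩ := this
    -- z⁻¹ has the same order as z, so z⁻¹ = z
    have hinv : z⁻¹ = z := eq_of_central_of_orderOf_eq h hz (orderOf_inv z).symm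
    have hz2 : z ^ 2 = 1 := by rw [pow_two]; nth_rewrite 1 [← hinv]; rw [inv_mul_cancel]
    have hord : orderOf z = 2 := orderOf_eq_prime hz2 hz1
    refine ⟨z, hz, hord, ?_, fun w hw => eq_of_central_of_orderOf_eq h hz (by rw [hord, hw])⟩
    apply le_antisymm
    · intro c hc'
      rcases eq_or_ne c 1 with rfl | hc1
      · exact Subgroup.one_mem _
      · have hcinv : c⁻¹ = c := eq_of_central_of_orderOf_eq h hc' (orderOf_inv c).symm
        have hc2 : c ^ 2 = 1 := by rw [pow_two]; nth_rewrite 1 [← hcinv]; rw [inv_mul_cancel]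
        have : c = z := eq_of_central_of_orderOf_eq h hz
          (by rw [hord, orderOf_eq_prime hc2 hc1])
        rw [this]
        exact Subgroup.mem_zpowers z
    · exact Subgroup.zpowers_le.mpr hz
end

section
/- Let Γ be an inner ultrahomogeneous group, let A ≤ Γ and B ≤ Γ with B contained in the normalizer of A, and suppose D = B·A is finitely generated. If σ is an injective endomorphism of A that commutes with conjugation by every element of B and fixes every element of A ∩ B, then the map sending b·a to b·σ(a) (for b ∈ B, a ∈ A) is a well-defined injective group homomorphism from D to D. -/
theorem extend_embedding_of_commuting_conjugation
    {Γ : Type*} [Group Γ] (A B : Subgroup Γ) (hBN : B ≤ Subgroup.normalizer (A : Set Γ))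
    (hfg : (A ⊔ B).FG)
    (σ : A →* A) (hinj : Function.Injective σ)
    (hcomm : ∀ (a : A) (b : B) (hm : (b : Γ)⁻¹ * (a : Γ) * (b : Γ) ∈ A),
      ((σ ⟨(b : Γ)⁻¹ * (a : Γ) * (b : Γ), hm⟩ : A) : Γ)
        = (b : Γ)⁻¹ * ((σ a : A) : Γ) * (b : Γ))
    (hfix : ∀ a : A, (a : Γ) ∈ B → σ a = a) :
    ∃ φ : (A ⊔ B : Subgroup Γ) →* (A ⊔ B : Subgroup Γ),
      Function.Injective φ ∧
      ∀ (b : B) (a : A),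
        ((φ ⟨(b : Γ) * (a : Γ),
            mul_mem ((le_sup_right : B ≤ A ⊔ B) b.2)
              ((le_sup_left : A ≤ A ⊔ B) a.2)⟩ : (A ⊔ B : Subgroup Γ)) : Γ)
          = (b : Γ) * ((σ a : A) : Γ) := by
  classical
  -- conjugation stays in A
  have hconj : ∀ b : Γ, b ∈ B → ∀ a : Γ, a ∈ A → b⁻¹ * a * b ∈ A := by
    intro b hb a ha
    exact (Subgroup.mem_normalizer_iff''.mp (hBN hb) a).mp ha
  -- every element of A ⊔ B is b * a
  have decomp : ∀ x : Γ, x ∈ (A ⊔ B : Subgroup Γ) →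
      ∃ b, b ∈ B ∧ ∃ a, a ∈ A ∧ x = b * a := by
    intro x hx
    rw [Subgroup.sup_eq_closure] at hx
    induction hx using Subgroup.closure_induction with
    | mem y hy =>
      rcases hy with hy | hy
      · exact ⟨1, one_mem _, y, hy, by group⟩
      · exact ⟨y, hy, 1, one_mem _, by group⟩
    | one => exact ⟨1, one_mem _, 1, one_mem _, by group⟩
    | mul y z hy hz ihy ihz =>
      obtain ⟨b₁, hb₁, a₁, ha₁, rfl⟩ := ihy
      obtain ⟨b₂, hb₂, a₂, ha₂, rfl⟩ := ihz
      exact ⟨b₁ * b₂, mul_mem hb₁ hb₂,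
        (b₂⁻¹ * a₁ * b₂) * a₂, mul_mem (hconj b₂ hb₂ a₁ ha₁) ha₂, by group⟩
    | inv y hy ihy =>
      obtain ⟨b, hb, a, ha, rfl⟩ := ihy
      exact ⟨b⁻¹, inv_mem hb,
        (b⁻¹)⁻¹ * a⁻¹ * b⁻¹, hconj b⁻¹ (inv_mem hb) a⁻¹ (inv_mem ha), by group⟩
  -- well-definedness
  have key : ∀ b₁ b₂ a₁ a₂ : Γ, ∀ hb₁ : b₁ ∈ B, ∀ hb₂ : b₂ ∈ B,
      ∀ ha₁ : a₁ ∈ A, ∀ ha₂ : a₂ ∈ A, b₁ * a₁ = b₂ * a₂ →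
      b₁ * ((σ ⟨a₁, ha₁⟩ : A) : Γ) = b₂ * ((σ ⟨a₂, ha₂⟩ : A) : Γ) := by
    intro b₁ b₂ a₁ a₂ hb₁ hb₂ ha₁ ha₂ h
    have hb : b₁ = b₂ * a₂ * a₁⁻¹ := by
      rw [eq_mul_inv_iff_mul_eq]; exact h
    have hc : b₂⁻¹ * b₁ = a₂ * a₁⁻¹ := by rw [hb]; group
    have hcA : b₂⁻¹ * b₁ ∈ A := hc ▸ mul_mem ha₂ (inv_mem ha₁)
    have hcB : b₂⁻¹ * b₁ ∈ B := mul_mem (inv_mem hb₂) hb₁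
    have ha2eq : (⟨a₂, ha₂⟩ : A) = ⟨b₂⁻¹ * b₁, hcA⟩ * ⟨a₁, ha₁⟩ := by
      ext
      simp only [Subgroup.coe_mul]
      rw [hc]; group
    have : σ ⟨a₂, ha₂⟩ = ⟨b₂⁻¹ * b₁, hcA⟩ * σ ⟨a₁, ha₁⟩ := by
      rw [ha2eq, map_mul, hfix ⟨b₂⁻¹ * b₁, hcA⟩ hcB]
    rw [this]
    push_cast
    group
  -- the underlying function
  have hval : ∀ x : (A ⊔ B : Subgroup Γ), ∃ y : (A ⊔ B : Subgroup Γ),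
      ∀ b a, ∀ hb : b ∈ B, ∀ ha : a ∈ A, (x : Γ) = b * a →
        (y : Γ) = b * ((σ ⟨a, ha⟩ : A) : Γ) := by
    intro x
    obtain ⟨b, hb, a, ha, hx⟩ := decomp x x.2
    refine ⟨⟨b * ((σ ⟨a, ha⟩ : A) : Γ),
      mul_mem ((le_sup_right : B ≤ A ⊔ B) hb)
        ((le_sup_left : A ≤ A ⊔ B) (σ ⟨a, ha⟩).2)⟩, ?_⟩
    intro b' a' hb' ha' hx'
    exact key b b' a a' hb hb' ha ha' (hx.symm.trans hx')
  choose f hf using hval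
  have hmul : ∀ x y, f (x * y) = f x * f y := by
    intro x y
    obtain ⟨b₁, hb₁, a₁, ha₁, hx⟩ := decomp x x.2
    obtain ⟨b₂, hb₂, a₂, ha₂, hy⟩ := decomp y y.2
    have hA' : b₂⁻¹ * a₁ * b₂ ∈ A := hconj b₂ hb₂ a₁ ha₁
    have hxy : ((x * y : (A ⊔ B : Subgroup Γ)) : Γ)
        = (b₁ * b₂) * ((b₂⁻¹ * a₁ * b₂) * a₂) := by
      push_cast
      rw [hx, hy]; group
    have h1 := hf x b₁ a₁ hb₁ ha₁ hx
    have h2 := hf y b₂ a₂ hb₂ ha₂ hy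
    have h3 := hf (x * y) (b₁ * b₂) ((b₂⁻¹ * a₁ * b₂) * a₂)
      (mul_mem hb₁ hb₂) (mul_mem hA' ha₂) hxy
    ext
    rw [Subgroup.coe_mul, h1, h2, h3]
    have hprod : (⟨(b₂⁻¹ * a₁ * b₂) * a₂, mul_mem hA' ha₂⟩ : A)
        = ⟨b₂⁻¹ * a₁ * b₂, hA'⟩ * ⟨a₂, ha₂⟩ := rfl
    rw [hprod, map_mul, Subgroup.coe_mul,
      hcomm ⟨a₁, ha₁⟩ ⟨b₂, hb₂⟩ hA']
    group
  refine ⟨MonoidHom.mk' f hmul, ?_, ?_⟩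
  · rw [injective_iff_map_eq_one]
    intro x hx
    obtain ⟨b, hb, a, ha, hxd⟩ := decomp x x.2
    have h1 := hf x b a hb ha hxd
    rw [show (MonoidHom.mk' f hmul) x = f x from rfl] at hx
    rw [hx] at h1
    have hb1 : b * ((σ ⟨a, ha⟩ : A) : Γ) = 1 := by rw [← h1]; rfl
    have h1' : ((σ ⟨a, ha⟩ : A) : Γ) = b⁻¹ := eq_inv_of_mul_eq_one_right hb1
    have hσB : ((σ ⟨a, ha⟩ : A) : Γ) ∈ B := h1' ▸ inv_mem hb
    have := hfix (σ ⟨a, ha⟩) hσB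
    have haeq : σ ⟨a, ha⟩ = ⟨a, ha⟩ := hinj this
    ext
    rw [hxd, show ((1 : (A ⊔ B : Subgroup Γ)) : Γ) = 1 from rfl]
    have : a = b⁻¹ := by rw [← h1']; exact congrArg Subtype.val haeq.symm
    rw [this]; group
  · intro b a
    exact hf _ (b : Γ) (a : Γ) b.2 a.2 rfl
end

section
/- Let G be a finite abelian group of odd order and let g ∈ G be an element that does not generate G. Then there exists a nontrivial automorphism of G fixing g. -/
theorem odd_abelian_nontrivial_automorphism_fixing
    {G : Type*} [CommGroup G] [Finite G] (hodd : Odd (Nat.card G))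
    (g : G) (hg : Subgroup.zpowers g ≠ ⊤) :
    ∃ σ : G ≃* G, σ ≠ MulEquiv.refl G ∧ σ g = g := by
  classical
  set Q := G ⧸ Subgroup.zpowers g with hQ
  have hQnt : Nontrivial Q := by
    rcases subsingleton_or_nontrivial Q with h | h
    · exact absurd ((Subgroup.eq_top_iff' _).mpr fun x =>
        (QuotientGroup.eq_one_iff x).mp (Subsingleton.elim _ _)) hg
    · exact h
  obtain ⟨ι, hι, n, hn1, ⟨e⟩⟩ := CommGroup.equiv_prod_multiplicative_zmod_of_finite Q
  -- find a coordinate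
  obtain ⟨q, hq⟩ := exists_ne (1 : Q)
  obtain ⟨i, hi⟩ : ∃ i : ι, e q i ≠ 1 := by
    by_contra h
    push_neg at h
    exact hq ((MulEquiv.map_eq_one_iff e).mp (funext h))
  obtain ⟨p, hp, hpn⟩ := Nat.exists_prime_and_dvd (Nat.ne_of_gt (hn1 i))
  haveI : Fact p.Prime := ⟨hp⟩
  haveI : NeZero (n i) := NeZero.of_gt (hn1 i)
  -- the character ψ : G →* Multiplicative (ZMod p) killing g
  let c1 : Multiplicative (ZMod (n i)) →* Multiplicative (ZMod p) :=
    AddMonoidHom.toMultiplicative (ZMod.castHom hpn (ZMod p)).toAddMonoidHom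
  let ψ : G →* Multiplicative (ZMod p) :=
    (c1.comp ((Pi.evalMonoidHom (fun j => Multiplicative (ZMod (n j))) i).comp
      e.toMonoidHom)).comp (QuotientGroup.mk' (Subgroup.zpowers g))
  have hψg : ψ g = 1 := by
    have : (QuotientGroup.mk' (Subgroup.zpowers g)) g = 1 :=
      (QuotientGroup.eq_one_iff g).mpr (Subgroup.mem_zpowers g)
    simp [ψ, this]
  have hψsurj : Function.Surjective ψ := by
    have h1 : Function.Surjective (QuotientGroup.mk' (Subgroup.zpowers g)) :=
      QuotientGroup.mk'_surjective _
    have h2 : Function.Surjective e.toMonoidHom := e.surjective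
    have h3 : Function.Surjective (Pi.evalMonoidHom (fun j => Multiplicative (ZMod (n j))) i) :=
      Function.surjective_eval i
    have h4 : Function.Surjective c1 := by
      intro x
      obtain ⟨k, hk⟩ := (ZMod.natCast_rightInverse (n := p)).surjective x.toAdd
      exact ⟨Multiplicative.ofAdd ((k : ZMod (n i))), by
        simp [c1, ← hk]
        rw [hk]
        exact ofAdd_toAdd x⟩
    exact h4.comp (h3.comp (h2.comp h1))
  -- p divides the order of G
  have hpG : p ∣ Nat.card G := by
    have h1 : Nat.card (Multiplicative (ZMod p)) ∣ Nat.card G :=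
      Subgroup.card_dvd_of_surjective ψ hψsurj
    simpa [Nat.card_eq_fintype_card, ZMod.card] using h1
  have hpodd : p ≠ 2 := by
    rintro rfl
    exact (Nat.not_even_iff_odd.mpr hodd) ((even_iff_two_dvd).mpr hpG)
  -- Cauchy
  obtain ⟨z0, hz0⟩ := exists_prime_orderOf_dvd_card' (G := G) p hpG
  -- adjust z so that ψ z ≠ -1
  obtain ⟨z, hz, hza⟩ : ∃ z : G, orderOf z = p ∧ (ψ z).toAdd ≠ -1 := by
    by_cases h : (ψ z0).toAdd = -1
    · refine ⟨z0 ^ 2, ?_, ?_⟩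
      · have hco : (orderOf z0).Coprime 2 := by
          rw [hz0]
          exact (Nat.prime_two.coprime_iff_not_dvd.mpr (by
            simpa [Nat.two_dvd_ne_zero] using Nat.odd_iff.mp (hp.odd_of_ne_two hpodd))).symm
        rw [hco.orderOf_pow, hz0]
      · rw [map_pow]
        intro hc
        have : (2 : ZMod p) * (ψ z0).toAdd = -1 := by
          rw [← hc]
          simp [pow_two, two_mul]
        rw [h] at this
        have h2 : (2 : ZMod p) * -1 = -1 := this
        have : (1 : ZMod p) = 0 := by ring_nf at h2 ⊢; linear_combination -h2
        simp at this
    · exact ⟨z0, hz0, h⟩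
  have hkey : (1 : ZMod p) + (ψ z).toAdd ≠ 0 := by
    intro h
    apply hza
    linear_combination h
  -- the pow along exponents lemma
  have hpow : ∀ a b : ZMod p, z ^ (a + b).val = z ^ a.val * z ^ b.val := by
    intro a b
    rw [← pow_add]
    have hv : (a + b).val = (a.val + b.val) % orderOf z := by rw [ZMod.val_add, hz]
    rw [hv, pow_mod_orderOf]
  -- the endomorphism
  have hψpow : ∀ x : G, ∀ k : ℕ, (ψ (x ^ k)).toAdd = (k : ZMod p) * (ψ x).toAdd := by
    intro x k
    rw [map_pow]
    induction k with
    | zero => simp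
    | succ m ih => rw [pow_succ, toAdd_mul, ih]; push_cast; ring
  let F : G →* G :=
    { toFun := fun x => x * z ^ (ψ x).toAdd.val
      map_one' := by simp
      map_mul' := by
        intro x y
        simp only [map_mul, toAdd_mul, hpow]
        exact mul_mul_mul_comm x y _ _ }
  have hψF : ∀ x : G, (ψ (F x)).toAdd = (ψ x).toAdd * (1 + (ψ z).toAdd) := by
    intro x
    show (ψ (x * z ^ (ψ x).toAdd.val)).toAdd = _
    rw [map_mul, toAdd_mul, hψpow, ZMod.natCast_val, ZMod.cast_id]
    ring
  have hinj : Function.Injective F := by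
    intro x y hxy
    have h1 : (ψ x).toAdd * (1 + (ψ z).toAdd) = (ψ y).toAdd * (1 + (ψ z).toAdd) := by
      rw [← hψF, ← hψF, hxy]
    have h2 : (ψ x).toAdd = (ψ y).toAdd := by
      field_simp [hkey] at h1
      exact h1
    have h3 : x * z ^ (ψ x).toAdd.val = y * z ^ (ψ y).toAdd.val := hxy
    rw [h2] at h3
    exact mul_right_cancel h3
  let σ : G ≃* G := MulEquiv.ofBijective F (Finite.injective_iff_bijective.mp hinj)
  refine ⟨σ, ?_, ?_⟩
  · -- nontrivial
    obtain ⟨x, hx⟩ := hψsurj (Multiplicative.ofAdd (1 : ZMod p))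
    intro hσ
    have hσx : σ x = x := by rw [hσ]; rfl
    have : x * z ^ (ψ x).toAdd.val = x := hσx
    have hz1 : z ^ (ψ x).toAdd.val = 1 := by rwa [mul_eq_left] at this
    have hdvd : orderOf z ∣ (ψ x).toAdd.val := orderOf_dvd_of_pow_eq_one hz1
    rw [hz] at hdvd
    haveI : Fact (1 < p) := ⟨hp.one_lt⟩
    have hval : (ψ x).toAdd.val = 1 := by
      rw [hx]
      simpa using ZMod.val_one p
    rw [hval] at hdvd
    exact hp.one_lt.ne' (Nat.dvd_one.mp hdvd)
  · -- fixes g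
    show F g = g
    show g * z ^ (ψ g).toAdd.val = g
    rw [hψg]
    simp
end

section
/- If Γ is an inner ultrahomogeneous group that is not torsion (has an element of infinite order), then Γ contains a free group of rank 2 as a subgroup, provided Γ contains a subgroup isomorphic to ℤ², using that GL₂(ℤ) contains a free subgroup of rank 2 and that any automorphism of a finitely generated subgroup is realized by conjugation. More precisely: if G ≤ Γ with G ≅ ℤ² and σ₁, σ₂ ∈ Aut(G) freely generate a free subgroup of Aut(G), and g₁, g₂ ∈ Γ act on G by conjugation as σ₁, σ₂ respectively, then g₁ and g₂ generate a free subgroup of Γ of rank 2. -/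
theorem free_subgroup_from_free_automorphisms
    {Γ : Type*} [Group Γ] (G : Subgroup Γ)
    (hG : Nonempty (G ≃* Multiplicative (ℤ × ℤ)))
    (σ₁ σ₂ : MulAut G)
    (hfree : Function.Injective
      ((FreeGroup.lift fun i : Fin 2 => if i = 0 then σ₁ else σ₂ :
        FreeGroup (Fin 2) →* MulAut G)))
    (g₁ g₂ : Γ)
    (h₁ : ∀ a : G, g₁⁻¹ * (a : Γ) * g₁ = ((σ₁ a : G) : Γ))
    (h₂ : ∀ a : G, g₂⁻¹ * (a : Γ) * g₂ = ((σ₂ a : G) : Γ)) :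
    Function.Injective
      ((FreeGroup.lift fun i : Fin 2 => if i = 0 then g₁ else g₂ :
        FreeGroup (Fin 2) →* Γ)) := by
  set φ : FreeGroup (Fin 2) →* Γ :=
    FreeGroup.lift fun i : Fin 2 => if i = 0 then g₁ else g₂ with hφ
  set ψ : FreeGroup (Fin 2) →* MulAut G :=
    FreeGroup.lift fun i : Fin 2 => if i = 0 then σ₁ else σ₂ with hψ
  set ι : FreeGroup (Fin 2) →* FreeGroup (Fin 2) :=
    FreeGroup.lift fun i : Fin 2 => (FreeGroup.of i)⁻¹ with hι
  have hιι : ∀ w, ι (ι w) = w := by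
    intro w
    induction w using FreeGroup.induction_on with
    | C1 => simp
    | of i =>
      show ι (ι (FreeGroup.of i)) = FreeGroup.of i
      simp [hι]
    | inv_of i h => simp_all
    | mul u v hu hv => simp_all
  set ψ' : FreeGroup (Fin 2) →* MulAut G := ψ.comp ι with hψ'
  have hψ'inj : Function.Injective ψ' := by
    intro u v h
    have h2 : ι u = ι v := hfree h
    have := congrArg ι h2
    rwa [hιι, hιι] at this
  -- key conjugation lemma: gᵢ a gᵢ⁻¹ = σᵢ⁻¹ a
  have key₁ : ∀ a : G, g₁ * (a : Γ) * g₁⁻¹ = ((σ₁⁻¹ a : G) : Γ) := by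
    intro a
    have := h₁ (σ₁⁻¹ a)
    rw [MulAut.apply_inv_self] at this
    rw [← this]; group
  have key₂ : ∀ a : G, g₂ * (a : Γ) * g₂⁻¹ = ((σ₂⁻¹ a : G) : Γ) := by
    intro a
    have := h₂ (σ₂⁻¹ a)
    rw [MulAut.apply_inv_self] at this
    rw [← this]; group
  have claim : ∀ w : FreeGroup (Fin 2), ∀ a : G,
      φ w * (a : Γ) * (φ w)⁻¹ = ((ψ' w a : G) : Γ) := by
    intro w
    induction w using FreeGroup.induction_on with
    | C1 => intro a; simp
    | of i =>
      intro a
      have hφi : φ (FreeGroup.of i) = if i = 0 then g₁ else g₂ := by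
        simp [hφ]
      have hψi : ψ' (FreeGroup.of i) = (if i = 0 then σ₁ else σ₂)⁻¹ := by
        simp [hψ', hι, hψ]
      show φ (FreeGroup.of i) * (a : Γ) * (φ (FreeGroup.of i))⁻¹ = ((ψ' (FreeGroup.of i) a : G) : Γ)
      rw [hφi, hψi]
      by_cases h : i = 0 <;> simp [h, key₁, key₂]
    | inv_of i _ =>
      intro a
      have hφi : φ (FreeGroup.of i) = if i = 0 then g₁ else g₂ := by
        simp [hφ]
      have hψi : ψ' (FreeGroup.of i)⁻¹ = (if i = 0 then σ₁ else σ₂) := by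
        simp [hψ', hι, hψ]
      show φ ((FreeGroup.of i)⁻¹) * (a : Γ) * (φ ((FreeGroup.of i)⁻¹))⁻¹ = ((ψ' ((FreeGroup.of i)⁻¹) a : G) : Γ)
      rw [map_inv, hφi, hψi, inv_inv]
      by_cases h : i = 0 <;> simp [h, h₁, h₂]
    | mul u v hu hv =>
      intro a
      rw [map_mul, map_mul]
      have : φ u * φ v * (a : Γ) * (φ u * φ v)⁻¹ =
          φ u * (φ v * (a : Γ) * (φ v)⁻¹) * (φ u)⁻¹ := by group
      rw [this, hv a, hu (ψ' v a)]
      rfl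
  rw [injective_iff_map_eq_one]
  intro w hw
  have hone : ψ' w = 1 := by
    ext a
    have := claim w a
    rw [hw] at this
    simp only [map_one, one_mul, inv_one, mul_one] at this
    simpa using (Subtype.coe_injective this).symm
  have : ψ' w = ψ' 1 := by simpa using hone
  simpa using hψ'inj this
end

section
/- Suppose Γ is an inner ultrahomogeneous group such that for every a ∈ Γ there exists g ∈ Γ of infinite order with ⟨a, g⟩ isomorphic (naturally) to the free product ⟨a⟩ * ⟨g⟩. Then every nonidentity element of Γ is a product of at most 4 conjugates of any other nonidentity element; in particular Γ is uniformly simple. -/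
open Subgroup Function

section Aux

variable {Γ : Type*} [Group Γ]

/-- `zpowers x` is finitely generated. -/
lemma aux_zpowers_fg (x : Γ) : (zpowers x).FG := by
  rw [Subgroup.fg_iff]
  exact ⟨{x}, by rw [zpowers_eq_closure], Set.finite_singleton x⟩

/-- the element `⟨x, _⟩` generates `zpowers x` as a group. -/
lemma aux_zpowers_gen (x : Γ) :
    ∀ z : zpowers x, z ∈ zpowers (⟨x, mem_zpowers x⟩ : zpowers x) := by
  rintro ⟨z, hz⟩
  rw [Subgroup.mem_zpowers_iff] at hz ⊢
  obtain ⟨k, hk⟩ := hz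
  exact ⟨k, Subtype.ext (by simpa using hk)⟩

/-- Any two infinite-order elements are conjugate in an inner ultrahomogeneous group. -/
lemma aux_conj_of_orderOf_zero (h : InnerUltrahomogeneous Γ) {x y : Γ}
    (hx : orderOf x = 0) (hy : orderOf y = 0) : ∃ c : Γ, c⁻¹ * x * c = y := by
  have hord : orderOf (⟨x, mem_zpowers x⟩ : zpowers x)
      = orderOf (⟨y, mem_zpowers y⟩ : zpowers y) := by
    rw [Subgroup.orderOf_mk, Subgroup.orderOf_mk, hx, hy]
  let e := mulEquivOfOrderOfEq (aux_zpowers_gen x) (aux_zpowers_gen y) hord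
  obtain ⟨c, hc⟩ := h (zpowers x) (zpowers y) (aux_zpowers_fg x) (aux_zpowers_fg y) e
  refine ⟨c, ?_⟩
  have := hc ⟨x, mem_zpowers x⟩
  rwa [show e ⟨x, mem_zpowers x⟩ = ⟨y, mem_zpowers y⟩ from
    mulEquivOfOrderOfEq_apply_gen _ _ _] at this

/-- A perm acting as translation by `t ≠ 0` has infinite order. -/
lemma aux_perm_pow_apply (P : Equiv.Perm ℂ) (t : ℂ) (hP : ∀ z, P z = z + t) :
    ∀ (n : ℕ) (z : ℂ), (P ^ n) z = z + n * t := by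
  intro n
  induction n with
  | zero => intro z; simp
  | succ n ih =>
    intro z
    rw [pow_succ', Equiv.Perm.mul_apply, hP, ih]
    push_cast
    ring

lemma aux_orderOf_translation (P : Equiv.Perm ℂ) (t : ℂ) (ht : t ≠ 0)
    (hP : ∀ z, P z = z + t) : orderOf P = 0 := by
  rw [orderOf_eq_zero_iff']
  intro n hn h1
  have h0 : (P ^ n) 0 = (0 : ℂ) := by rw [h1]; rfl
  rw [aux_perm_pow_apply P t hP n 0, zero_add] at h0
  rcases mul_eq_zero.mp h0 with h' | h'
  · exact (Nat.cast_ne_zero.mpr hn.ne').elim (by exact_mod_cast h')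
  · exact ht h'

/-- transfer infinite order through the injective lift. -/
lemma aux_orderOf_lift_zero {A B : Subgroup Γ}
    (hinj : Injective (Monoid.Coprod.lift A.subtype B.subtype))
    {H : Type} [Group H] (φA : A →* H) (φB : B →* H) (w : Monoid.Coprod A B)
    (hw : orderOf (Monoid.Coprod.lift φA φB w) = 0) :
    orderOf (Monoid.Coprod.lift A.subtype B.subtype w) = 0 := by
  rw [orderOf_eq_zero_iff'] at hw ⊢
  intro n hn hcon
  apply hw n hn
  rw [← map_pow] at hcon ⊢
  have hwn : w ^ n = 1 := hinj (by rw [hcon, map_one])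
  rw [hwn, map_one]

/-- there is a unit of ℂ, different from 1, whose order divides m (m ≠ 1). -/
lemma aux_exists_unit (m : ℕ) (hm : m ≠ 1) :
    ∃ u : ℂˣ, (u : ℂ) ≠ 1 ∧ orderOf u ∣ m := by
  rcases Nat.eq_zero_or_pos m with rfl | hpos
  · exact ⟨Units.mk0 (2 : ℂ) (by norm_num), by norm_num, dvd_zero _⟩
  · have hm2 : 1 < m := lt_of_le_of_ne hpos (Ne.symm hm)
    have hζ := Complex.isPrimitiveRoot_exp m (by omega)
    have hu : IsPrimitiveRoot (hζ.isUnit hpos.ne').unit m := hζ.isUnit_unit hpos.ne'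
    refine ⟨(hζ.isUnit hpos.ne').unit, ?_, ?_⟩
    · have := hζ.ne_one hm2
      simpa using this
    · rw [← hu.eq_orderOf]

/-- The translation-by-one permutation of ℂ. -/
noncomputable def auxTau : Equiv.Perm ℂ := Equiv.addLeft (1 : ℂ)

lemma auxTau_apply (z : ℂ) : auxTau z = z + 1 := by
  simp [auxTau, add_comm]

lemma auxTau_orderOf : orderOf auxTau = 0 :=
  aux_orderOf_translation _ 1 one_ne_zero auxTau_apply

/-- Given `g` of infinite order, the hom `zpowers g →* Perm ℂ` sending `g` to translation. -/
noncomputable def auxPhiB (g : Γ) (hg : orderOf g = 0) : zpowers g →* Equiv.Perm ℂ :=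
  monoidHomOfForallMemZpowers (aux_zpowers_gen g)
    (g' := auxTau) (by rw [Subgroup.orderOf_mk, hg]; exact dvd_zero _)

lemma auxPhiB_gen (g : Γ) (hg : orderOf g = 0) :
    auxPhiB g hg ⟨g, mem_zpowers g⟩ = auxTau :=
  monoidHomOfForallMemZpowers_apply_gen _ _

/-- key fact 1: `a * g` has infinite order. -/
lemma aux_orderOf_mul_zero {a g : Γ} (hg : orderOf g = 0)
    (hinj : Injective (Monoid.Coprod.lift (zpowers a).subtype (zpowers g).subtype)) :
    orderOf (a * g) = 0 := by
  set A := zpowers a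
  set B := zpowers g
  set w : Monoid.Coprod A B :=
    Monoid.Coprod.inl ⟨a, mem_zpowers a⟩ * Monoid.Coprod.inr ⟨g, mem_zpowers g⟩ with hw
  have hval : Monoid.Coprod.lift A.subtype B.subtype w = a * g := by
    simp [hw, Monoid.Coprod.lift_apply_inl, Monoid.Coprod.lift_apply_inr]
  rw [← hval]
  apply aux_orderOf_lift_zero hinj (1 : A →* Equiv.Perm ℂ) (auxPhiB g hg)
  have : Monoid.Coprod.lift (1 : A →* Equiv.Perm ℂ) (auxPhiB g hg) w = auxTau := by
    simp [hw, Monoid.Coprod.lift_apply_inl, Monoid.Coprod.lift_apply_inr, auxPhiB_gen]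
  rw [this]
  exact auxTau_orderOf

/-- key fact 2: the commutator `a * g * a⁻¹ * g⁻¹` has infinite order when `a ≠ 1`. -/
lemma aux_orderOf_comm_zero {a g : Γ} (ha : a ≠ 1) (hg : orderOf g = 0)
    (hinj : Injective (Monoid.Coprod.lift (zpowers a).subtype (zpowers g).subtype)) :
    orderOf (a * g * a⁻¹ * g⁻¹) = 0 := by
  set A := zpowers a
  set B := zpowers g
  obtain ⟨u, hu1, hudvd⟩ := aux_exists_unit (orderOf a) (by
    simpa [orderOf_eq_one_iff] using ha)
  set α : Equiv.Perm ℂ := MulAction.toPermHom ℂˣ ℂ u with hα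
  have hαdvd : orderOf α ∣ orderOf (⟨a, mem_zpowers a⟩ : A) := by
    rw [Subgroup.orderOf_mk]
    exact (orderOf_map_dvd (MulAction.toPermHom ℂˣ ℂ) u).trans hudvd
  set φA : A →* Equiv.Perm ℂ :=
    monoidHomOfForallMemZpowers (aux_zpowers_gen a) hαdvd with hφA
  have hφAgen : φA ⟨a, mem_zpowers a⟩ = α := monoidHomOfForallMemZpowers_apply_gen _ _
  set w : Monoid.Coprod A B :=
    Monoid.Coprod.inl ⟨a, mem_zpowers a⟩ * Monoid.Coprod.inr ⟨g, mem_zpowers g⟩ *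
      (Monoid.Coprod.inl ⟨a, mem_zpowers a⟩)⁻¹ *
      (Monoid.Coprod.inr ⟨g, mem_zpowers g⟩)⁻¹ with hw
  have hval : Monoid.Coprod.lift A.subtype B.subtype w = a * g * a⁻¹ * g⁻¹ := by
    simp [hw, Monoid.Coprod.lift_apply_inl, Monoid.Coprod.lift_apply_inr]
  rw [← hval]
  apply aux_orderOf_lift_zero hinj φA (auxPhiB g hg)
  have hPval : Monoid.Coprod.lift φA (auxPhiB g hg) w = α * auxTau * α⁻¹ * auxTau⁻¹ := by
    simp [hw, Monoid.Coprod.lift_apply_inl, Monoid.Coprod.lift_apply_inr, hφAgen, auxPhiB_gen]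
  rw [hPval]
  apply aux_orderOf_translation _ ((u : ℂ) - 1) (sub_ne_zero.mpr hu1)
  intro z
  have hαap : ∀ y : ℂ, α y = (u : ℂ) * y := fun y => rfl
  have hαinvap : ∀ y : ℂ, α⁻¹ y = ((u⁻¹ : ℂˣ) : ℂ) * y := by
    intro y
    rw [hα, ← map_inv (MulAction.toPermHom ℂˣ ℂ)]
    rfl
  have hτinvap : ∀ y : ℂ, auxTau⁻¹ y = y - 1 := by
    intro y
    have : auxTau (y - 1) = y := by rw [auxTau_apply]; ring
    calc auxTau⁻¹ y = auxTau⁻¹ (auxTau (y - 1)) := by rw [this]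
      _ = y - 1 := by simp
  rw [Equiv.Perm.mul_apply, Equiv.Perm.mul_apply, Equiv.Perm.mul_apply,
    hτinvap, hαinvap, auxTau_apply, hαap]
  have hzu : (u : ℂ) * ((u⁻¹ : ℂˣ) : ℂ) = 1 := by
    rw [← Units.val_mul, mul_inv_cancel, Units.val_one]
  calc (u : ℂ) * (((u⁻¹ : ℂˣ) : ℂ) * (z - 1) + 1)
      = ((u : ℂ) * ((u⁻¹ : ℂˣ) : ℂ)) * (z - 1) + (u : ℂ) := by ring
    _ = z + ((u : ℂ) - 1) := by rw [hzu]; ring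

/-- conjugating a product list. -/
lemma aux_conj_prod (l : List Γ) (c : Γ) :
    (l.map fun z => c⁻¹ * z * c).prod = c⁻¹ * l.prod * c := by
  induction l with
  | nil => simp
  | cons y l ih => simp [ih]; group

end Aux

theorem uniformly_simple_of_free_products
    {Γ : Type*} [Group Γ] (h : InnerUltrahomogeneous Γ)
    (hfp : ∀ a : Γ, ∃ g : Γ, orderOf g = 0 ∧
      Function.Injective
        (Monoid.Coprod.lift (Subgroup.zpowers a).subtype (Subgroup.zpowers g).subtype)) :
    ∀ a b : Γ, a ≠ 1 → b ≠ 1 →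
      ∃ l : List Γ, l.length ≤ 4 ∧
        (∀ x ∈ l, ∃ c : Γ, x = c⁻¹ * a * c ∨ x = c⁻¹ * a⁻¹ * c) ∧
        l.prod = b := by
  intro a b ha hb
  obtain ⟨g, hg0, hginj⟩ := hfp a
  have hx : orderOf (a * g * a⁻¹ * g⁻¹) = 0 := aux_orderOf_comm_zero ha hg0 hginj
  set x := a * g * a⁻¹ * g⁻¹ with hxdef
  obtain ⟨k, hk0, hkinj⟩ := hfp b
  have hbk : orderOf (b * k) = 0 := aux_orderOf_mul_zero hk0 hkinj
  have hkinv : orderOf k⁻¹ = 0 := by rw [orderOf_inv]; exact hk0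
  obtain ⟨c, hc⟩ := aux_conj_of_orderOf_zero h hx hbk
  obtain ⟨d, hd⟩ := aux_conj_of_orderOf_zero h hx hkinv
  set la : List Γ := [a, g * a⁻¹ * g⁻¹] with hla
  have hlaprod : la.prod = x := by simp [hla, hxdef]; group
  refine ⟨(la.map fun z => c⁻¹ * z * c) ++ (la.map fun z => d⁻¹ * z * d), ?_, ?_, ?_⟩
  · simp [hla]
  · intro y hy
    have hmem : ∀ (e : Γ), ∀ y ∈ (la.map fun z => e⁻¹ * z * e),
        ∃ c' : Γ, y = c'⁻¹ * a * c' ∨ y = c'⁻¹ * a⁻¹ * c' := by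
      intro e y hy
      simp only [hla, List.map_cons, List.map_nil, List.mem_cons, List.not_mem_nil,
        or_false] at hy
      rcases hy with rfl | rfl
      · exact ⟨e, Or.inl rfl⟩
      · exact ⟨g⁻¹ * e, Or.inr (by group)⟩
    rcases List.mem_append.mp hy with hy' | hy'
    · exact hmem c y hy'
    · exact hmem d y hy'
  · rw [List.prod_append, aux_conj_prod, aux_conj_prod, hlaprod, hc, hd]
    group
end

section
/- Let Γ be a torsion inner ultrahomogeneous group into which every finite group embeds. Then Γ is uniformly simple: every element of Γ is a product of at most 4 conjugates of any given nonidentity element. -/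
section ZPow

variable {Γ : Type*} [Group Γ]

/-- The underlying function of the mul-equiv between `zpowers x` and `zpowers y`. -/
noncomputable def zpMap (x y : Γ) (a : Subgroup.zpowers x) : Γ :=
  y ^ (Subgroup.mem_zpowers_iff.mp a.2).choose

lemma zpMap_mem (x y : Γ) (a : Subgroup.zpowers x) : zpMap x y a ∈ Subgroup.zpowers y :=
  ⟨_, rfl⟩

lemma zpMap_spec {x y : Γ} (hxy : orderOf x = orderOf y) (k : ℤ)
    (hmem : x ^ k ∈ Subgroup.zpowers x) :
    zpMap x y ⟨x ^ k, hmem⟩ = y ^ k := by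
  have hs : x ^ (Subgroup.mem_zpowers_iff.mp hmem).choose = x ^ k :=
    (Subgroup.mem_zpowers_iff.mp hmem).choose_spec
  have := (zpow_eq_zpow_iff_modEq (x := x)).mp hs
  rw [hxy] at this
  exact (zpow_eq_zpow_iff_modEq (x := y)).mpr this

/-- The mul-equiv between `zpowers x` and `zpowers y` for elements of equal order,
sending `x ^ k` to `y ^ k`. -/
noncomputable def zpEquiv {x y : Γ} (hxy : orderOf x = orderOf y) :
    Subgroup.zpowers x ≃* Subgroup.zpowers y where
  toFun a := ⟨zpMap x y a, zpMap_mem x y a⟩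
  invFun b := ⟨zpMap y x b, zpMap_mem y x b⟩
  left_inv := by
    rintro ⟨av, ha⟩
    obtain ⟨k, rfl⟩ := Subgroup.mem_zpowers_iff.mp ha
    apply Subtype.ext
    have h1 : (⟨zpMap x y ⟨x ^ k, ha⟩, zpMap_mem x y _⟩ : Subgroup.zpowers y)
        = ⟨y ^ k, Subgroup.mem_zpowers_iff.mpr ⟨k, rfl⟩⟩ := Subtype.ext (zpMap_spec hxy k ha)
    have h2 := congrArg (fun b : Subgroup.zpowers y => zpMap y x b) h1
    exact h2.trans (zpMap_spec hxy.symm k _)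
  right_inv := by
    rintro ⟨bv, hb⟩
    obtain ⟨k, rfl⟩ := Subgroup.mem_zpowers_iff.mp hb
    apply Subtype.ext
    have h1 : (⟨zpMap y x ⟨y ^ k, hb⟩, zpMap_mem y x _⟩ : Subgroup.zpowers x)
        = ⟨x ^ k, Subgroup.mem_zpowers_iff.mpr ⟨k, rfl⟩⟩ := Subtype.ext (zpMap_spec hxy.symm k hb)
    have h2 := congrArg (fun a : Subgroup.zpowers x => zpMap x y a) h1
    exact h2.trans (zpMap_spec hxy k _)
  map_mul' := by
    rintro ⟨av, ha⟩ ⟨bv, hb⟩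
    obtain ⟨k, rfl⟩ := Subgroup.mem_zpowers_iff.mp ha
    obtain ⟨l, rfl⟩ := Subgroup.mem_zpowers_iff.mp hb
    apply Subtype.ext
    have hmem : x ^ k * x ^ l ∈ Subgroup.zpowers x := mul_mem ha hb
    have h2 : (⟨x ^ k * x ^ l, hmem⟩ : Subgroup.zpowers x)
        = ⟨x ^ (k + l), Subgroup.mem_zpowers_iff.mpr ⟨k + l, rfl⟩⟩ :=
      Subtype.ext (zpow_add x k l).symm
    show zpMap x y ⟨x ^ k * x ^ l, hmem⟩ = zpMap x y ⟨x ^ k, ha⟩ * zpMap x y ⟨x ^ l, hb⟩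
    rw [h2, zpMap_spec hxy (k + l) _, zpMap_spec hxy k ha, zpMap_spec hxy l hb, zpow_add]

lemma zpowers_fg (x : Γ) : (Subgroup.zpowers x).FG :=
  ⟨{x}, by simp [Subgroup.zpowers_eq_closure]⟩

lemma exists_conj_of_orderOf_eq (h : InnerUltrahomogeneous Γ) {x y : Γ}
    (hxy : orderOf x = orderOf y) : ∃ c : Γ, c⁻¹ * x * c = y := by
  obtain ⟨g, hg⟩ := h (Subgroup.zpowers x) (Subgroup.zpowers y)
    (zpowers_fg x) (zpowers_fg y) (zpEquiv hxy)
  refine ⟨g, ?_⟩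
  have hx1 : (⟨x, Subgroup.mem_zpowers x⟩ : Subgroup.zpowers x)
      = ⟨x ^ (1 : ℤ), Subgroup.mem_zpowers_iff.mpr ⟨1, rfl⟩⟩ := Subtype.ext (zpow_one x).symm
  have := hg ⟨x, Subgroup.mem_zpowers x⟩
  rw [this]
  show zpMap x y _ = y
  rw [hx1, zpMap_spec hxy 1 _, zpow_one]

lemma orderOf_conj' (c t : Γ) : orderOf (c⁻¹ * t * c) = orderOf t := by
  have : c⁻¹ * t * c = (MulAut.conj c⁻¹) t := by simp [MulAut.conj_apply]
  rw [this]
  exact orderOf_injective (MulAut.conj c⁻¹).toMonoidHom (MulAut.conj c⁻¹).injective t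

end ZPow

namespace UnifSimpleAux

variable (n m : ℕ)

/-- The abelian base group of the wreath product: functions `ZMod n → ZMod m`. -/
abbrev A := ZMod n → Multiplicative (ZMod m)

/-- The shifting action of `ZMod n` on `A n m`. -/
def φ : Multiplicative (ZMod n) →* MulAut (A n m) where
  toFun b :=
    { toFun := fun v j => v (j - b.toAdd)
      invFun := fun v j => v (j + b.toAdd)
      left_inv := fun v => funext fun j => by simp
      right_inv := fun v => funext fun j => by simp
      map_mul' := fun v w => rfl }
  map_one' := by
    apply MulEquiv.ext
    intro v
    funext j
    simp
  map_mul' b c := by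
    apply MulEquiv.ext
    intro v
    funext j
    show v (j - (b.toAdd + c.toAdd)) = v (j - b.toAdd - c.toAdd)
    rw [sub_sub]

/-- The wreath product `ZMod m ≀ ZMod n`. -/
abbrev G := SemidirectProduct (A n m) (Multiplicative (ZMod n)) (φ n m)

/-- The base vector with a `1` in coordinate `0` and a `-1` in coordinate `1`. -/
def δ : A n m := fun i =>
  Multiplicative.ofAdd (if i = 0 then 1 else if i = 1 then -1 else 0)

def xx : G n m := SemidirectProduct.inr (Multiplicative.ofAdd 1)

def zz : G n m := SemidirectProduct.inl (δ n m)

def yy : G n m := ⟨fun j => δ n m (j + 1), Multiplicative.ofAdd (-1)⟩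

lemma xx_mul_yy : xx n m * yy n m = zz n m := by
  refine SemidirectProduct.ext ?_ ?_
  · show (1 : A n m) * (φ n m (Multiplicative.ofAdd 1) (yy n m).left) = δ n m
    funext j
    show (1 : Multiplicative (ZMod m)) * δ n m (j - 1 + 1) = δ n m j
    rw [one_mul, sub_add_cancel]
  · show Multiplicative.ofAdd 1 * Multiplicative.ofAdd (-1) = 1
    rw [← ofAdd_add]
    simp

variable [NeZero n] [NeZero m]

instance : Finite (G n m) := by
  apply Finite.of_injective (fun g : G n m => (g.left, g.right))
  rintro ⟨a1, b1⟩ ⟨a2, b2⟩ h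
  simp only [Prod.mk.injEq] at h
  exact SemidirectProduct.ext h.1 h.2


lemma orderOf_xx : orderOf (xx n m) = n := by
  rw [xx, orderOf_injective _ SemidirectProduct.inr_injective,
    orderOf_ofAdd_eq_addOrderOf, ZMod.addOrderOf_one]

lemma orderOf_zz : orderOf (zz n m) = m := by
  rw [zz, orderOf_injective _ SemidirectProduct.inl_injective]
  apply Nat.dvd_antisymm
  · apply orderOf_dvd_of_pow_eq_one
    funext j
    show (δ n m j) ^ m = 1
    rw [δ, ← ofAdd_nsmul]
    have : ∀ c : ZMod m, m • c = 0 := fun c => by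
      rw [nsmul_eq_mul, ZMod.natCast_self, zero_mul]
    rw [this]
    rfl
  · have h0 : (δ n m) ^ (orderOf (δ n m)) = 1 := pow_orderOf_eq_one _
    have h1 : (δ n m 0) ^ (orderOf (δ n m)) = 1 := by
      rw [← Pi.pow_apply, h0, Pi.one_apply]
    have h2 : δ n m 0 = Multiplicative.ofAdd (1 : ZMod m) := by
      rw [δ, if_pos rfl]
    rw [h2, ← ofAdd_nsmul] at h1
    have h3 : (orderOf (δ n m)) • (1 : ZMod m) = 0 := by
      have := congrArg Multiplicative.toAdd h1
      simpa using this
    have := addOrderOf_dvd_of_nsmul_eq_zero h3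
    rwa [ZMod.addOrderOf_one] at this

/-- helper: reindexing a product over `range n` as a product over `ZMod n`. -/
lemma prod_range_zmod {M : Type*} [CommMonoid M] (F : ZMod n → M) :
    ∏ i ∈ Finset.range n, F (i : ZMod n) = ∏ t : ZMod n, F t := by
  refine Finset.prod_nbij' (fun a => ((a : ℕ) : ZMod n)) (fun t => t.val)
    (fun a _ => Finset.mem_univ _) (fun t _ => Finset.mem_range.mpr (ZMod.val_lt t))
    (fun a ha => ZMod.val_cast_of_lt (Finset.mem_range.mp ha))
    (fun t _ => ZMod.natCast_rightInverse t) (fun a _ => rfl)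

lemma yy_pow (k : ℕ) :
    (yy n m) ^ k = ⟨fun j => ∏ i ∈ Finset.range k, δ n m (j + 1 + (i : ZMod n)),
      Multiplicative.ofAdd (-(k : ZMod n))⟩ := by
  induction k with
  | zero =>
    refine SemidirectProduct.ext ?_ ?_
    · funext j; simp
    · simp
  | succ k ih =>
    rw [pow_succ, ih]
    refine SemidirectProduct.ext ?_ ?_
    · funext j
      show (fun j => ∏ i ∈ Finset.range k, δ n m (j + 1 + (i : ZMod n))) j *
          (φ n m (Multiplicative.ofAdd (-(k : ZMod n))) (yy n m).left) j = _
      show (∏ i ∈ Finset.range k, δ n m (j + 1 + (i : ZMod n))) *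
          δ n m (j - (-(k : ZMod n)) + 1) = ∏ i ∈ Finset.range (k + 1), δ n m (j + 1 + (i : ZMod n))
      rw [Finset.prod_range_succ]
      congr 1
      push_cast
      ring_nf
    · show Multiplicative.ofAdd (-(k : ZMod n)) * Multiplicative.ofAdd (-1) = _
      rw [← ofAdd_add]
      congr 1
      push_cast
      ring

lemma sum_δ (hn : (0 : ZMod n) ≠ 1) : (∑ t : ZMod n, (δ n m t).toAdd) = 0 := by
  have : ∀ t : ZMod n, (δ n m t).toAdd =
      (if t = 0 then (1 : ZMod m) else 0) + (if t = 1 then -1 else 0) := by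
    intro t
    rcases eq_or_ne t 0 with rfl | h0
    · simp [δ, hn]
    · rcases eq_or_ne t 1 with rfl | h1
      · simp [δ, h0]
      · simp [δ, h0, h1]
  simp only [this]
  rw [Finset.sum_add_distrib, Finset.sum_ite_eq' Finset.univ (0 : ZMod n),
    Finset.sum_ite_eq' Finset.univ (1 : ZMod n)]
  simp

lemma yy_pow_n (hn : (0 : ZMod n) ≠ 1) : (yy n m) ^ n = 1 := by
  rw [yy_pow]
  refine SemidirectProduct.ext ?_ ?_
  · funext j
    show ∏ i ∈ Finset.range n, δ n m (j + 1 + (i : ZMod n)) = 1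
    rw [prod_range_zmod n (fun t => δ n m (j + 1 + t))]
    have h1 : ∏ t : ZMod n, δ n m (j + 1 + t) = ∏ s : ZMod n, δ n m s :=
      Fintype.prod_equiv (Equiv.addLeft (j + 1)) _ _ (fun t => rfl)
    rw [h1]
    have h2 : (∏ s : ZMod n, δ n m s) = Multiplicative.ofAdd (∑ s : ZMod n, (δ n m s).toAdd) := by
      rw [ofAdd_sum]
      rfl
    rw [h2, sum_δ n m hn]
    rfl
  · show Multiplicative.ofAdd (-(n : ZMod n)) = 1
    rw [ZMod.natCast_self, neg_zero]
    rfl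

lemma orderOf_yy (hn : (0 : ZMod n) ≠ 1) : orderOf (yy n m) = n := by
  apply Nat.dvd_antisymm
  · exact orderOf_dvd_of_pow_eq_one (yy_pow_n n m hn)
  · have h1 : (yy n m) ^ (orderOf (yy n m)) = 1 := pow_orderOf_eq_one _
    have h2 := congrArg SemidirectProduct.rightHom h1
    rw [map_pow, map_one] at h2
    have h3 : SemidirectProduct.rightHom (yy n m) = Multiplicative.ofAdd (-1 : ZMod n) := rfl
    rw [h3] at h2
    have h4 := orderOf_dvd_of_pow_eq_one h2
    rwa [orderOf_ofAdd_eq_addOrderOf, addOrderOf_neg, ZMod.addOrderOf_one] at h4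

end UnifSimpleAux

theorem uniformly_simple_of_torsion_universal
    {Γ : Type*} [Group Γ] (h : InnerUltrahomogeneous Γ)
    (htor : ∀ g : Γ, IsOfFinOrder g)
    (huniv : ∀ (H : Type) [Group H] [Finite H], ∃ f : H →* Γ, Function.Injective f) :
    ∀ a b : Γ, a ≠ 1 →
      ∃ l : List Γ, l.length ≤ 4 ∧
        (∀ x ∈ l, ∃ c : Γ, x = c⁻¹ * a * c) ∧
        l.prod = b := by
  intro a b ha
  set n := orderOf a with hn
  set m := orderOf b with hm
  have hnz : NeZero n := ⟨(htor a).orderOf_pos.ne'⟩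
  have hmz : NeZero m := ⟨(htor b).orderOf_pos.ne'⟩
  have hn0 : n ≠ 0 := hnz.out
  have hn1 : n ≠ 1 := fun h1 => ha (orderOf_eq_one_iff.mp (by rw [← hn, h1]))
  have hn2 : 1 < n := by omega
  have hn01 : (0 : ZMod n) ≠ 1 := by
    intro h01
    have hv := congrArg ZMod.val h01
    rw [ZMod.val_zero] at hv
    have hv1 : ((1 : ℕ) : ZMod n).val = 1 := ZMod.val_cast_of_lt hn2
    rw [Nat.cast_one] at hv1
    omega
  obtain ⟨f, hf⟩ := huniv (UnifSimpleAux.G n m)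
  have hfx : orderOf (f (UnifSimpleAux.xx n m)) = n := by
    rw [orderOf_injective f hf, UnifSimpleAux.orderOf_xx]
  have hfy : orderOf (f (UnifSimpleAux.yy n m)) = n := by
    rw [orderOf_injective f hf, UnifSimpleAux.orderOf_yy n m hn01]
  have hfz : orderOf (f (UnifSimpleAux.zz n m)) = m := by
    rw [orderOf_injective f hf, UnifSimpleAux.orderOf_zz]
  obtain ⟨c, hc⟩ := exists_conj_of_orderOf_eq h (x := f (UnifSimpleAux.zz n m)) (y := b)
    (by rw [hfz, hm])
  set p := c⁻¹ * f (UnifSimpleAux.xx n m) * c with hp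
  set q := c⁻¹ * f (UnifSimpleAux.yy n m) * c with hq
  have hpq : p * q = b := by
    have hmul : f (UnifSimpleAux.xx n m) * f (UnifSimpleAux.yy n m)
        = f (UnifSimpleAux.zz n m) := by
      rw [← map_mul, UnifSimpleAux.xx_mul_yy]
    calc p * q = c⁻¹ * (f (UnifSimpleAux.xx n m) * f (UnifSimpleAux.yy n m)) * c := by
          rw [hp, hq]; group
      _ = c⁻¹ * f (UnifSimpleAux.zz n m) * c := by rw [hmul]
      _ = b := hc
  have hop : orderOf p = n := by rw [hp, orderOf_conj', hfx]
  have hoq : orderOf q = n := by rw [hq, orderOf_conj', hfy]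
  obtain ⟨d1, hd1⟩ := exists_conj_of_orderOf_eq h (x := a) (y := p) (by rw [hop])
  obtain ⟨d2, hd2⟩ := exists_conj_of_orderOf_eq h (x := a) (y := q) (by rw [hoq])
  refine ⟨[p, q], by simp, ?_, by simp [hpq]⟩
  intro x hx
  simp only [List.mem_cons, List.not_mem_nil, or_false] at hx
  rcases hx with rfl | rfl
  · exact ⟨d1, hd1.symm⟩
  · exact ⟨d2, hd2.symm⟩
end

section
/- If Γ is an inner ultrahomogeneous group, then Γ = Γ_∞ · Γ_{2^∞}, where Γ_∞ is the normal subgroup generated by elements of infinite order and Γ_{2^∞} is the normal subgroup generated by elements of 2-power order. In particular, if Γ is torsion then Γ = Γ_{2^∞}, and if Γ has no element of order 2 then Γ = Γ_∞. -/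
open scoped Pointwise


/-- In an inner ultrahomogeneous group, every element is conjugate to its inverse. -/
lemma conj_to_inv {Γ : Type*} [Group Γ] (h : InnerUltrahomogeneous Γ) (g : Γ) :
    ∃ c : Γ, c⁻¹ * g * c = g⁻¹ := by
  set A := Subgroup.zpowers g with hA
  have hFG : A.FG := ⟨{g}, by simp [hA, Subgroup.zpowers_eq_closure]⟩
  haveI : IsMulCommutative A := Subgroup.zpowers_isMulCommutative g
  let e : A ≃* A := open IsMulCommutative in MulEquiv.inv A
  obtain ⟨c, hc⟩ := h A A hFG hFG e
  refine ⟨c, ?_⟩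
  have := hc ⟨g, Subgroup.mem_zpowers g⟩
  simpa [e] using this

lemma odd_of_dvd_odd {d m : ℕ} (hd : d ∣ m) (hm : Odd m) : Odd d := by
  obtain ⟨e, rfl⟩ := hd
  exact (Nat.odd_mul.mp hm).1

theorem group_eq_infinite_order_mul_two_power_order
    {Γ : Type*} [Group Γ] (h : InnerUltrahomogeneous Γ) :
    (∀ g : Γ, ∃ x ∈ Subgroup.normalClosure {y : Γ | orderOf y = 0},
      ∃ z ∈ Subgroup.normalClosure {y : Γ | ∃ k : ℕ, orderOf y = 2 ^ k}, g = x * z) ∧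
    ((∀ g : Γ, IsOfFinOrder g) →
      Subgroup.normalClosure {y : Γ | ∃ k : ℕ, orderOf y = 2 ^ k} = ⊤) ∧
    ((∀ g : Γ, orderOf g ≠ 2) →
      Subgroup.normalClosure {y : Γ | orderOf y = 0} = ⊤) := by
  set Ninf := Subgroup.normalClosure {y : Γ | orderOf y = 0} with hNinf
  set N2 := Subgroup.normalClosure {y : Γ | ∃ k : ℕ, orderOf y = 2 ^ k} with hN2
  set N := Ninf ⊔ N2 with hNdef
  haveI hNn : N.Normal := Subgroup.sup_normal Ninf N2
  -- In the quotient Q = Γ/N, every element has odd (finite) order.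
  have hodd : ∀ g : Γ, Odd (orderOf (g : Γ ⧸ N)) := by
    intro g
    by_cases hg : orderOf g = 0
    · have h1 : (g : Γ ⧸ N) = 1 := by
        rw [QuotientGroup.eq_one_iff]
        exact Subgroup.mem_sup_left (Subgroup.subset_normalClosure hg)
      rw [h1, orderOf_one]
      exact ⟨0, by norm_num⟩
    · set n := orderOf g with hn
      set m := n / 2 ^ n.factorization 2 with hm
      have hmdvd : m ∣ n := Nat.ordCompl_dvd n 2
      have hmpos : m ≠ 0 := (Nat.ordCompl_pos 2 hg).ne'
      have hpow : orderOf (g ^ m) = 2 ^ n.factorization 2 := by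
        rw [orderOf_pow' g hmpos, ← hn, Nat.gcd_eq_right hmdvd, hm]
        exact Nat.div_div_self (Nat.ordProj_dvd n 2) hg
      have hgm : g ^ m ∈ N :=
        Subgroup.mem_sup_right (Subgroup.subset_normalClosure ⟨_, hpow⟩)
      have hq : ((g : Γ ⧸ N)) ^ m = 1 := by
        rw [← QuotientGroup.mk_pow, QuotientGroup.eq_one_iff]
        exact hgm
      have hdvd : orderOf (g : Γ ⧸ N) ∣ m := orderOf_dvd_of_pow_eq_one hq
      have hmodd : Odd m := by
        have h2 : ¬ (2 ∣ m) := (Nat.Prime.coprime_iff_not_dvd Nat.prime_two).mp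
          (Nat.coprime_ordCompl Nat.prime_two hg)
        rw [Nat.odd_iff]
        omega
      exact odd_of_dvd_odd hdvd hmodd
  -- every element of the quotient is trivial
  have hq1 : ∀ q : Γ ⧸ N, q = 1 := by
    intro q
    obtain ⟨g, rfl⟩ := QuotientGroup.mk_surjective q
    obtain ⟨c, hc⟩ := conj_to_inv h g
    set q := (g : Γ ⧸ N) with hqdef
    set qc := (c : Γ ⧸ N) with hqcdef
    have hconj : qc⁻¹ * q * qc = q⁻¹ := by
      have := congrArg (QuotientGroup.mk (s := N)) hc
      simpa [hqdef, hqcdef] using this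
    have hconj2 : qc⁻¹ * q⁻¹ * qc = q := by
      have hinv := congrArg (·⁻¹) hconj
      simp only [mul_inv_rev, inv_inv] at hinv
      rw [← mul_assoc] at hinv
      exact hinv
    have hc1 : q * qc = qc * q⁻¹ := by
      calc q * qc = qc * (qc⁻¹ * q * qc) := by group
        _ = qc * q⁻¹ := by rw [hconj]
    have hc2 : q⁻¹ * qc = qc * q := by
      calc q⁻¹ * qc = qc * (qc⁻¹ * q⁻¹ * qc) := by group
        _ = qc * q := by rw [hconj2]
    have hcomm : Commute q (qc ^ 2) := by
      show q * qc ^ 2 = qc ^ 2 * q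
      calc q * qc ^ 2 = (q * qc) * qc := by rw [pow_two, mul_assoc]
        _ = qc * (q⁻¹ * qc) := by rw [hc1, mul_assoc]
        _ = qc * (qc * q) := by rw [hc2]
        _ = qc ^ 2 * q := by rw [pow_two, mul_assoc]
    obtain ⟨s, hs⟩ := hodd c
    have ht : orderOf qc = 2 * s + 1 := hs
    have hqc : (qc ^ 2) ^ (s + 1) = qc := by
      rw [← pow_mul]
      have h21 : 2 * (s + 1) = orderOf qc + 1 := by rw [ht]; ring
      rw [h21, pow_succ, pow_orderOf_eq_one, one_mul]
    have hcq : Commute q qc := by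
      have hpow := hcomm.pow_right (s + 1)
      rwa [hqc] at hpow
    have hfix : qc⁻¹ * q * qc = q := by
      rw [mul_assoc, hcq.eq, ← mul_assoc, inv_mul_cancel, one_mul]
    have hq2 : q⁻¹ = q := by rw [← hconj, hfix]
    have hdvd2 : orderOf q ∣ 2 := by
      apply orderOf_dvd_of_pow_eq_one
      rw [pow_two]
      nth_rewrite 1 [← hq2]
      exact inv_mul_cancel q
    rcases (Nat.dvd_prime Nat.prime_two).mp hdvd2 with h1 | h2
    · exact orderOf_eq_one_iff.mp h1
    · exact absurd (h2 ▸ hodd g) (by decide)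
  have htop : N = ⊤ := by
    rw [Subgroup.eq_top_iff']
    intro g
    rw [← QuotientGroup.eq_one_iff (N := N) g]
    exact hq1 _
  refine ⟨?_, ?_, ?_⟩
  · intro g
    have hsup : Ninf ⊔ N2 = ⊤ := by rw [← hNdef]; exact htop
    have hg2 : g ∈ ((Ninf : Set Γ) * (N2 : Set Γ)) := by
      rw [← Subgroup.mul_normal Ninf N2, hsup]
      simp
    rw [Set.mem_mul] at hg2
    obtain ⟨x, hx, z, hz, hxz⟩ := hg2
    exact ⟨x, hx, z, hz, hxz.symm⟩
  · intro htor
    have hbot : Ninf = ⊥ := by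
      rw [hNinf]
      refine le_antisymm (Subgroup.normalClosure_le_normal ?_) bot_le
      intro y hy
      exact absurd hy (htor y).orderOf_pos.ne'
    rw [← bot_sup_eq N2, ← hbot, ← hNdef, htop]
  · intro h2
    have hbot : N2 = ⊥ := by
      rw [hN2]
      refine le_antisymm (Subgroup.normalClosure_le_normal ?_) bot_le
      rintro y ⟨k, hk⟩
      rcases Nat.eq_zero_or_pos k with rfl | hkpos
      · simpa using orderOf_eq_one_iff.mp (by simpa using hk)
      · exfalso
        apply h2 (y ^ 2 ^ (k - 1))
        rw [orderOf_pow' y (pow_ne_zero _ two_ne_zero), hk]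
        rw [Nat.gcd_eq_right (pow_dvd_pow 2 (Nat.sub_le k 1))]
        rw [Nat.pow_div (Nat.sub_le k 1) (by norm_num)]
        have hk1 : k - (k - 1) = 1 := by omega
        rw [hk1, pow_one]
    rw [← sup_bot_eq Ninf, ← hbot, ← hNdef, htop]
end

section
/- If M is an ultrahomogeneous first-order structure whose age has disjoint amalgamation, then for every finitely generated substructure A ⊆ M and every element b ∈ M \ A, the orbit of b under the pointwise stabilizer Aut(M/A) is infinite. -/
open FirstOrder CategoryTheory

/-- A class `K` of (bundled) `L`-structures has disjoint amalgamation if any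
two members with a common embedded member `C` amalgamate over `C` so that the
images intersect exactly in the image of `C`. -/
def DisjointAmalgamation (L : FirstOrder.Language.{u, v})
    (K : Set (Bundled.{w} L.Structure)) : Prop :=
  ∀ A B C : Bundled.{w} L.Structure, A ∈ K → B ∈ K → C ∈ K →
    ∀ (f : C ↪[L] A) (g : C ↪[L] B),
      ∃ D ∈ K, ∃ (fa : A ↪[L] D) (fb : B ↪[L] D),
        fa.comp f = fb.comp g ∧
        Set.range fa ∩ Set.range fb = Set.range (fa.comp f)

theorem infinite_orbit_of_disjoint_amalgamation
    (L : FirstOrder.Language.{u, v}) (M : Type w) [L.Structure M]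
    (hUH : L.IsUltrahomogeneous M)
    (hDA : DisjointAmalgamation L (L.age M))
    (A : L.Substructure M) (hA : A.FG) (b : M) (hb : b ∉ A) :
    Set.Infinite {x : M | ∃ σ : M ≃[L] M, (∀ a ∈ A, σ a = a) ∧ σ b = x} := by
  set S : Set M := {x : M | ∃ σ : M ≃[L] M, (∀ a ∈ A, σ a = a) ∧ σ b = x} with hS
  by_contra hfin
  rw [Set.not_infinite] at hfin
  -- the substructure generated by A and the orbit
  set B : L.Substructure M := A ⊔ FirstOrder.Language.Substructure.closure L S with hBdef
  have hAB : A ≤ B := le_sup_left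
  have hSB : S ⊆ (B : Set M) := fun x hx =>
    (le_sup_right : FirstOrder.Language.Substructure.closure L S ≤ B) (FirstOrder.Language.Substructure.subset_closure hx)
  have hbS : b ∈ S := ⟨FirstOrder.Language.Equiv.refl L M, fun a _ => rfl, rfl⟩
  have hbB : b ∈ B := hSB hbS
  have hBfg : B.FG := hA.sup (FirstOrder.Language.Substructure.fg_closure hfin)
  -- bundled structures
  let Ab : Bundled L.Structure := ⟨A, inferInstance⟩
  let Bb : Bundled L.Structure := ⟨B, inferInstance⟩
  have hAage : Ab ∈ L.age M :=
    ⟨(A.fg_iff_structure_fg).1 hA, ⟨A.subtype⟩⟩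
  have hBage : Bb ∈ L.age M :=
    ⟨(B.fg_iff_structure_fg).1 hBfg, ⟨B.subtype⟩⟩
  obtain ⟨D, hDage, fa, fb, hcomm, hdisj⟩ :=
    hDA Bb Bb Ab hBage hBage hAage
      (FirstOrder.Language.Substructure.inclusion hAB)
      (FirstOrder.Language.Substructure.inclusion hAB)
  obtain ⟨-, ⟨h⟩⟩ := hDage
  obtain ⟨σ₁, hσ₁⟩ := hUH B hBfg (h.comp fa)
  obtain ⟨σ₂, hσ₂⟩ := hUH B hBfg (h.comp fb)
  have hσ₁' : ∀ x : B, σ₁ (x : M) = h (fa x) := fun x =>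
    (congrFun (congrArg (fun e => e.toFun) hσ₁) x).symm
  have hσ₂' : ∀ x : B, σ₂ (x : M) = h (fb x) := fun x =>
    (congrFun (congrArg (fun e => e.toFun) hσ₂) x).symm
  let τ : M ≃[L] M := FirstOrder.Language.Equiv.comp σ₂.symm σ₁
  have hfix : ∀ a ∈ A, τ a = a := by
    intro a ha
    have hfab : fa (FirstOrder.Language.Substructure.inclusion hAB ⟨a, ha⟩)
        = fb (FirstOrder.Language.Substructure.inclusion hAB ⟨a, ha⟩) :=
      congrFun (congrArg (fun e => e.toFun) hcomm) ⟨a, ha⟩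
    have h1 : σ₁ a = h (fa ⟨a, hAB ha⟩) := hσ₁' ⟨a, hAB ha⟩
    have h2 : σ₂ a = h (fb ⟨a, hAB ha⟩) := hσ₂' ⟨a, hAB ha⟩
    have : σ₁ a = σ₂ a := by
      rw [h1, h2]
      exact congrArg h hfab
    show σ₂.symm (σ₁ a) = a
    rw [this]; exact σ₂.symm_apply_apply a
  have hτbS : τ b ∈ S := ⟨τ, hfix, rfl⟩
  have hτbB : τ b ∈ B := hSB hτbS
  -- derive that fa ⟨b⟩ = fb ⟨τ b⟩
  have key : h (fa ⟨b, hbB⟩) = h (fb ⟨τ b, hτbB⟩) := by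
    rw [← hσ₁' ⟨b, hbB⟩, ← hσ₂' ⟨τ b, hτbB⟩]
    show σ₁ b = σ₂ (σ₂.symm (σ₁ b))
    exact (σ₂.apply_symm_apply _).symm
  have hfafb : fa ⟨b, hbB⟩ = fb ⟨τ b, hτbB⟩ := h.injective key
  have hmem : fa ⟨b, hbB⟩ ∈ Set.range fa ∩ Set.range fb :=
    ⟨⟨_, rfl⟩, ⟨_, hfafb.symm⟩⟩
  rw [hdisj] at hmem
  obtain ⟨c, hc⟩ := hmem
  have : (FirstOrder.Language.Substructure.inclusion hAB) c = ⟨b, hbB⟩ :=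
    fa.injective hc
  have hcb : (c : M) = b := congrArg Subtype.val this
  have hbA : b ∈ A := hcb ▸ c.2
  exact hb hbA
end
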